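/- (One-soliton boundedness, Fig. 2.) Let κ_1 < κ_2 be reals, K_j(x) = κ_j x_1 + κ_j² x_2 for j = 1, 2, and d > 0. Define F(x) = d(κ_1 − κ_2)e^{K_1(x)+K_2(x)} / (d e^{K_1(x)} + e^{K_2(x)}) (the discrete value Φ(x, iκ_2) of the Jost solution). For q = (q_1, q_2) ∈ ℝ², the function x ↦ e^{−(q_1 x_1 + q_2 x_2)} F(x) is bounded on ℝ² if and only if q_2 − (κ_1 + κ_2)q_1 + κ_1 κ_2 = 0 and κ_1 ≤ q_1 ≤ κ_2. -/

import Mathlib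

private lemma harm_aux (M P R : ℝ) (hM : 0 < M) (hP : M ≤ P) (hR : M ≤ R) :
    M / 2 ≤ P * R / (P + R) := by
  have hPR : 0 < P + R := by linarith
  rw [div_le_div_iff₀ (by norm_num) hPR]
  nlinarith [mul_nonneg (by linarith : (0:ℝ) ≤ P) (by linarith : (0:ℝ) ≤ R - M),
    mul_nonneg (by linarith : (0:ℝ) ≤ R) (by linarith : (0:ℝ) ≤ P - M)]

theorem stmt_13 (κ₁ κ₂ : ℝ) (hκ : κ₁ < κ₂) (d : ℝ) (hd : 0 < d)
    (K₁ K₂ : ℝ × ℝ → ℝ)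
    (hK₁ : ∀ x, K₁ x = κ₁ * x.1 + κ₁ ^ 2 * x.2)
    (hK₂ : ∀ x, K₂ x = κ₂ * x.1 + κ₂ ^ 2 * x.2)
    (F : ℝ × ℝ → ℝ)
    (hF : ∀ x, F x = d * (κ₁ - κ₂) * Real.exp (K₁ x + K₂ x) /
      (d * Real.exp (K₁ x) + Real.exp (K₂ x)))
    (q₁ q₂ : ℝ) :
    (∃ C : ℝ, ∀ x : ℝ × ℝ, |Real.exp (-(q₁ * x.1 + q₂ * x.2)) * F x| ≤ C) ↔
      (q₂ - (κ₁ + κ₂) * q₁ + κ₁ * κ₂ = 0 ∧ κ₁ ≤ q₁ ∧ q₁ ≤ κ₂) := by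
  have hval : ∀ x : ℝ × ℝ, |Real.exp (-(q₁ * x.1 + q₂ * x.2)) * F x|
      = d * (κ₂ - κ₁) *
        Real.exp (((κ₁ - q₁) * x.1 + (κ₁ ^ 2 - q₂) * x.2) +
          ((κ₂ - q₁) * x.1 + (κ₂ ^ 2 - q₂) * x.2)) /
        (d * Real.exp ((κ₁ - q₁) * x.1 + (κ₁ ^ 2 - q₂) * x.2) +
          Real.exp ((κ₂ - q₁) * x.1 + (κ₂ ^ 2 - q₂) * x.2)) := by
    intro x
    rw [hF, hK₁, hK₂]
    set P := q₁ * x.1 + q₂ * x.2 with hP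
    set A := (κ₁ - q₁) * x.1 + (κ₁ ^ 2 - q₂) * x.2 with hA
    set B := (κ₂ - q₁) * x.1 + (κ₂ ^ 2 - q₂) * x.2 with hB
    have e1 : κ₁ * x.1 + κ₁ ^ 2 * x.2 = A + P := by rw [hA, hP]; ring
    have e2 : κ₂ * x.1 + κ₂ ^ 2 * x.2 = B + P := by rw [hB, hP]; ring
    rw [e1, e2]
    have key : Real.exp (-P) *
        (d * (κ₁ - κ₂) * Real.exp ((A + P) + (B + P)) /
          (d * Real.exp (A + P) + Real.exp (B + P)))
        = -(d * (κ₂ - κ₁) * Real.exp (A + B) / (d * Real.exp A + Real.exp B)) := by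
      have h1 : (0:ℝ) < d * Real.exp A + Real.exp B := by positivity
      have h2 : (0:ℝ) < d * Real.exp (A+P) + Real.exp (B+P) := by positivity
      rw [Real.exp_neg]
      rw [show (A + P) + (B + P) = (A + B) + (P + P) by ring]
      rw [Real.exp_add (A+B), Real.exp_add P P, Real.exp_add A P, Real.exp_add B P]
      field_simp
      ring
    rw [key, abs_neg, abs_of_nonneg (div_nonneg (mul_nonneg (mul_nonneg hd.le
      (by linarith)) (Real.exp_pos _).le) (by positivity))]
  constructor
  · rintro ⟨C, hC⟩
    -- unboundedness in any direction where both phases grow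
    have unb : ∀ v : ℝ × ℝ, 0 < (κ₁ - q₁) * v.1 + (κ₁ ^ 2 - q₂) * v.2 →
        0 < (κ₂ - q₁) * v.1 + (κ₂ ^ 2 - q₂) * v.2 → False := by
      intro v hA0 hB0
      set A₀ := (κ₁ - q₁) * v.1 + (κ₁ ^ 2 - q₂) * v.2 with hA0def
      set B₀ := (κ₂ - q₁) * v.1 + (κ₂ ^ 2 - q₂) * v.2 with hB0def
      set M : ℝ := 2 * (|C| + 1) / (κ₂ - κ₁) with hMdef
      have hM : 0 < M := div_pos (by positivity) (by linarith)
      set t : ℝ := max (Real.log (M / d) / A₀) (Real.log M / B₀) with htdef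
      have h1 : M ≤ d * Real.exp (t * A₀) := by
        have ht1 : Real.log (M / d) / A₀ ≤ t := le_max_left _ _
        have hle : Real.log (M / d) ≤ t * A₀ := by
          rw [div_le_iff₀ hA0] at ht1; linarith
        have h := Real.exp_le_exp.mpr hle
        rw [Real.exp_log (by positivity)] at h
        exact (div_le_iff₀' hd).mp h
      have h2 : M ≤ Real.exp (t * B₀) := by
        have ht2 : Real.log M / B₀ ≤ t := le_max_right _ _
        have hle : Real.log M ≤ t * B₀ := by
          rw [div_le_iff₀ hB0] at ht2; linarith
        have h := Real.exp_le_exp.mpr hle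
        rwa [Real.exp_log hM] at h
      -- evaluate bound at x = (t v₁, t v₂)
      have hx := hC (t * v.1, t * v.2)
      rw [hval] at hx
      simp only at hx
      have eA : (κ₁ - q₁) * (t * v.1) + (κ₁ ^ 2 - q₂) * (t * v.2) = t * A₀ := by
        rw [hA0def]; ring
      have eB : (κ₂ - q₁) * (t * v.1) + (κ₂ ^ 2 - q₂) * (t * v.2) = t * B₀ := by
        rw [hB0def]; ring
      rw [eA, eB] at hx
      have hlow : (κ₂ - κ₁) * (M / 2) ≤
          d * (κ₂ - κ₁) * Real.exp (t * A₀ + t * B₀) /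
            (d * Real.exp (t * A₀) + Real.exp (t * B₀)) := by
        have hh := harm_aux M (d * Real.exp (t * A₀)) (Real.exp (t * B₀)) hM h1 h2
        have heq : d * (κ₂ - κ₁) * Real.exp (t * A₀ + t * B₀) /
            (d * Real.exp (t * A₀) + Real.exp (t * B₀))
            = (κ₂ - κ₁) * ((d * Real.exp (t * A₀)) * Real.exp (t * B₀) /
              (d * Real.exp (t * A₀) + Real.exp (t * B₀))) := by
          rw [Real.exp_add]; ring
        rw [heq]
        have := mul_le_mul_of_nonneg_left hh (by linarith : (0:ℝ) ≤ κ₂ - κ₁)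
        linarith
      have hMmul : M * (κ₂ - κ₁) = 2 * (|C| + 1) :=
        div_mul_cancel₀ _ (by intro h; linarith : κ₂ - κ₁ ≠ 0)
      have hMeq : (κ₂ - κ₁) * (M / 2) = |C| + 1 := by
        have : (κ₂ - κ₁) * (M / 2) = M * (κ₂ - κ₁) / 2 := by ring
        rw [this, hMmul]; ring
      have := le_abs_self C
      linarith
    refine ⟨?_, ?_, ?_⟩
    · by_contra hQ
      set det : ℝ := (κ₂ - κ₁) * (q₂ - (κ₁ + κ₂) * q₁ + κ₁ * κ₂) with hdetdef
      have hdet : det ≠ 0 := mul_ne_zero (by intro h; linarith [h]; ) hQ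
      apply unb ((κ₂ ^ 2 - κ₁ ^ 2) / det, (κ₁ - κ₂) / det)
      · have : (κ₁ - q₁) * ((κ₂ ^ 2 - κ₁ ^ 2) / det) + (κ₁ ^ 2 - q₂) * ((κ₁ - κ₂) / det)
            = 1 := by
          rw [hdetdef] at hdet ⊢
          rw [mul_div_assoc', mul_div_assoc', ← add_div, div_eq_one_iff_eq hdet]
          ring
        simp only [this]; norm_num
      · have : (κ₂ - q₁) * ((κ₂ ^ 2 - κ₁ ^ 2) / det) + (κ₂ ^ 2 - q₂) * ((κ₁ - κ₂) / det)
            = 1 := by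
          rw [hdetdef] at hdet ⊢
          rw [mul_div_assoc', mul_div_assoc', ← add_div, div_eq_one_iff_eq hdet]
          ring
        simp only [this]; norm_num
    · by_contra h
      push_neg at h
      exact unb (1, 0) (by simp; linarith) (by simp; linarith)
    · by_contra h
      push_neg at h
      exact unb (-1, 0) (by simp; linarith) (by simp; linarith)
  · rintro ⟨hQ, h1, h2⟩
    refine ⟨d * (κ₂ - κ₁) + (κ₂ - κ₁), fun x => ?_⟩
    rw [hval]
    have hq2 : q₂ = (κ₁ + κ₂) * q₁ - κ₁ * κ₂ := by linarith
    set A := (κ₁ - q₁) * x.1 + (κ₁ ^ 2 - q₂) * x.2 with hA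
    set B := (κ₂ - q₁) * x.1 + (κ₂ ^ 2 - q₂) * x.2 with hB
    have hAe : A = (κ₁ - q₁) * (x.1 + (κ₁ + κ₂) * x.2) := by rw [hA, hq2]; ring
    have hBe : B = (κ₂ - q₁) * (x.1 + (κ₁ + κ₂) * x.2) := by rw [hB, hq2]; ring
    have hden : (0:ℝ) < d * Real.exp A + Real.exp B := by positivity
    rcases le_or_gt 0 (x.1 + (κ₁ + κ₂) * x.2) with hu | hu
    · have hA0 : A ≤ 0 := by
        rw [hAe]; exact mul_nonpos_of_nonpos_of_nonneg (by linarith) hu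
      calc d * (κ₂ - κ₁) * Real.exp (A + B) / (d * Real.exp A + Real.exp B)
          ≤ d * (κ₂ - κ₁) * Real.exp (A + B) / Real.exp B :=
            div_le_div_of_nonneg_left
              (mul_nonneg (mul_nonneg hd.le (by linarith)) (Real.exp_pos _).le)
              (Real.exp_pos _) (by nlinarith [mul_pos hd (Real.exp_pos A)])
        _ = d * (κ₂ - κ₁) * Real.exp A := by
            rw [Real.exp_add]
            field_simp
        _ ≤ d * (κ₂ - κ₁) * 1 :=
            mul_le_mul_of_nonneg_left (Real.exp_le_one_iff.mpr hA0)
              (mul_nonneg hd.le (by linarith))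
        _ ≤ d * (κ₂ - κ₁) + (κ₂ - κ₁) := by nlinarith
    · have hB0 : B ≤ 0 := by
        rw [hBe]; exact mul_nonpos_of_nonneg_of_nonpos (by linarith) hu.le
      calc d * (κ₂ - κ₁) * Real.exp (A + B) / (d * Real.exp A + Real.exp B)
          ≤ d * (κ₂ - κ₁) * Real.exp (A + B) / (d * Real.exp A) :=
            div_le_div_of_nonneg_left
              (mul_nonneg (mul_nonneg hd.le (by linarith)) (Real.exp_pos _).le)
              (by positivity) (by nlinarith [Real.exp_pos B])
        _ = (κ₂ - κ₁) * Real.exp B := by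
            rw [Real.exp_add]
            field_simp
        _ ≤ (κ₂ - κ₁) * 1 :=
            mul_le_mul_of_nonneg_left (Real.exp_le_one_iff.mpr hB0) (by linarith)
        _ ≤ d * (κ₂ - κ₁) + (κ₂ - κ₁) := by nlinarith
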